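/- Let N ≥ 1, let Q be an N×N complex Hermitian positive definite matrix, and let H be a K×N complex matrix such that HᴴH is positive definite (H has full column rank). Then there exists an N×N complex Hermitian positive definite matrix Q' such that: (i) Q' commutes with HᴴH (equivalently, Q' and HᴴH are simultaneously unitarily diagonalizable); (ii) the matrices H·Q'·Hᴴ and H·Q·Hᴴ have the same characteristic polynomial (hence the same eigenvalues with multiplicity); and (iii) trace(Q') ≤ trace(Q). -/

import Mathlib

open Matrix ComplexOrder

open Polynomial in
private lemma my_charmatrix_diagonal {R : Type*} [CommRing R] {n : Type*} [Fintype n]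
    [DecidableEq n] (v : n → R) :
    charmatrix (diagonal v) = diagonal fun i => (X : R[X]) - C (v i) := by
  ext i j
  rcases eq_or_ne i j with rfl | h
  · simp [charmatrix_apply]
  · simp [charmatrix_apply, diagonal_apply_ne _ h, h]

open Polynomial in
private lemma my_charpoly_diagonal {R : Type*} [CommRing R] {n : Type*} [Fintype n]
    [DecidableEq n] (v : n → R) :
    (diagonal v).charpoly = ∏ i, ((X : R[X]) - C (v i)) := by
  rw [charpoly, my_charmatrix_diagonal, det_diagonal]

open Polynomial in
private lemma my_charpoly_conj {R : Type*} [CommRing R] {n : Type*} [Fintype n]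
    [DecidableEq n] (P P' M : Matrix n n R) (h1 : P * P' = 1) :
    (P * M * P').charpoly = M.charpoly := by
  have hs : ∀ A : Matrix n n R,
      charmatrix A = scalar n (X : R[X]) - (C : R →+* R[X]).mapMatrix A := fun _ => rfl
  have hc : Commute (scalar n (X : R[X])) ((C : R →+* R[X]).mapMatrix P) :=
    scalar_commute (X : R[X]) (fun r' => Commute.all _ _) _
  have key : charmatrix (P * M * P') =
      (C : R →+* R[X]).mapMatrix P * charmatrix M * (C : R →+* R[X]).mapMatrix P' := by
    have h3 : (C : R →+* R[X]).mapMatrix P * scalar n (X : R[X]) * (C : R →+* R[X]).mapMatrix P'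
        = scalar n (X : R[X]) := by
      rw [← hc.eq, mul_assoc, ← _root_.map_mul, h1, _root_.map_one, mul_one]
    rw [hs, hs, mul_sub, sub_mul, h3, _root_.map_mul, _root_.map_mul]
  have hdet : ((C : R →+* R[X]).mapMatrix P).det * ((C : R →+* R[X]).mapMatrix P').det = 1 := by
    rw [← det_mul, ← _root_.map_mul, h1, _root_.map_one, det_one]
  rw [charpoly, key, det_mul, det_mul, charpoly]
  calc ((C : R →+* R[X]).mapMatrix P).det * (charmatrix M).det * ((C : R →+* R[X]).mapMatrix P').det
      = (charmatrix M).det *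
        (((C : R →+* R[X]).mapMatrix P).det * ((C : R →+* R[X]).mapMatrix P').det) := by ring
    _ = (charmatrix M).det := by rw [hdet, mul_one]

open Polynomial in
private lemma my_charpoly_mul_comm_rect {R : Type*} [CommRing R] {m n : Type*} [Fintype n]
    [DecidableEq n] [Fintype m] [DecidableEq m] (A : Matrix m n R) (B : Matrix n m R) :
    (A * B).charpoly * X ^ (Fintype.card n) = X ^ (Fintype.card m) * (B * A).charpoly := by
  have hP : (fromBlocks (1 : Matrix m m R) A (0 : Matrix n m R) (1 : Matrix n n R)) *
      (fromBlocks 1 (-A) 0 1) = 1 := by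
    rw [fromBlocks_multiply]; simp [← fromBlocks_one]
  have hconj : fromBlocks (1 : Matrix m m R) A (0 : Matrix n m R) (1 : Matrix n n R) *
      fromBlocks 0 0 B (B * A) * fromBlocks 1 (-A) 0 1
      = fromBlocks (A * B) 0 B 0 := by
    rw [fromBlocks_multiply, fromBlocks_multiply]
    congr 1 <;> simp [Matrix.mul_assoc]
  have e1 : (fromBlocks (A * B) (0 : Matrix m n R) B (0 : Matrix n n R)).charpoly
      = (A * B).charpoly * (0 : Matrix n n R).charpoly := charpoly_fromBlocks_zero₁₂ _ _ _
  have e2 : (fromBlocks (0 : Matrix m m R) (0 : Matrix m n R) B (B * A)).charpoly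
      = (0 : Matrix m m R).charpoly * (B * A).charpoly := charpoly_fromBlocks_zero₁₂ _ _ _
  have hzn : (0 : Matrix n n R).charpoly = X ^ (Fintype.card n) := by
    rw [← diagonal_zero, my_charpoly_diagonal]; simp [Finset.card_univ]
  have hzm : (0 : Matrix m m R).charpoly = X ^ (Fintype.card m) := by
    rw [← diagonal_zero, my_charpoly_diagonal]; simp [Finset.card_univ]
  have h := my_charpoly_conj _ _ (fromBlocks (0 : Matrix m m R) (0 : Matrix m n R) B (B * A)) hP
  rw [hconj, e2, hzm] at h
  rw [← hzn, ← e1, h]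

private lemma my_exists_perm_le {n : Type*} [Fintype n] [DecidableEq n] (c d : n → ℝ)
    (B : Matrix n n ℝ) (hB : B ∈ doublyStochastic ℝ n) :
    ∃ σ : Equiv.Perm n, ∑ i, c i * d (σ i) ≤ ∑ i, ∑ j, c i * (B i j * d j) := by
  obtain ⟨w, hw0, hw1, hwB⟩ := exists_eq_sum_perm_of_mem_doublyStochastic hB
  set S : Equiv.Perm n → ℝ := fun τ => ∑ i, c i * d (τ i) with hS
  obtain ⟨σ, -, hσ⟩ := Finset.exists_min_image Finset.univ S ⟨1, Finset.mem_univ 1⟩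
  refine ⟨σ, ?_⟩
  have hBij : ∀ i j, B i j = ∑ τ : Equiv.Perm n, w τ * (if τ i = j then 1 else 0) := by
    intro i j
    rw [← hwB]
    simp [Matrix.sum_apply, Equiv.Perm.permMatrix, PEquiv.toMatrix_apply, Equiv.toPEquiv_apply,
      eq_comm, mul_ite]
  have key : ∑ i, ∑ j, c i * (B i j * d j) = ∑ τ, w τ * S τ := by
    have h1 : ∀ i j, c i * (B i j * d j)
        = ∑ τ : Equiv.Perm n, w τ * (c i * (if τ i = j then d j else 0)) := by
      intro i j
      rw [hBij, Finset.sum_mul, Finset.mul_sum]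
      congr 1; ext τ
      by_cases h : τ i = j <;> simp [h] <;> ring
    calc ∑ i, ∑ j, c i * (B i j * d j)
        = ∑ i, ∑ τ : Equiv.Perm n, w τ * (c i * d (τ i)) := by
          refine Finset.sum_congr rfl fun i _ => ?_
          simp_rw [h1]
          rw [Finset.sum_comm]
          refine Finset.sum_congr rfl fun τ _ => ?_
          simp_rw [mul_ite, mul_zero, Finset.sum_ite_eq]
          simp
      _ = ∑ τ : Equiv.Perm n, w τ * S τ := by
          rw [Finset.sum_comm]
          refine Finset.sum_congr rfl fun τ _ => ?_
          rw [hS, Finset.mul_sum]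
  rw [key]
  calc S σ = ∑ τ : Equiv.Perm n, w τ * S σ := by rw [← Finset.sum_mul, hw1, one_mul]
    _ ≤ ∑ τ, w τ * S τ :=
      Finset.sum_le_sum fun τ _ => mul_le_mul_of_nonneg_left (hσ τ (Finset.mem_univ τ)) (hw0 τ)

private lemma my_posDef_conj {n : Type*} [Fintype n] [DecidableEq n] (A B : Matrix n n ℂ)
    (hA : A.PosDef) (hB : IsUnit B) : (Bᴴ * A * B).PosDef := by
  refine Matrix.PosDef.of_dotProduct_mulVec_pos (isHermitian_conjTranspose_mul_mul B hA.1) fun x hx => ?_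
  have hinj : Function.Injective (B.mulVec) := mulVec_injective_iff_isUnit.mpr hB
  have hBx : B *ᵥ x ≠ 0 := (hinj.ne_iff' (mulVec_zero B)).2 hx
  have h := hA.dotProduct_mulVec_pos hBx
  rw [show (Bᴴ * A * B) *ᵥ x = Bᴴ *ᵥ (A *ᵥ (B *ᵥ x)) by simp [Matrix.mul_assoc],
    Matrix.dotProduct_mulVec, show star x ᵥ* Bᴴ = star (B *ᵥ x) by rw [star_mulVec]]
  exact h

theorem exists_commuting_covariance (N K : ℕ) (hN : 1 ≤ N)
    (Q : Matrix (Fin N) (Fin N) ℂ) (hQ : Q.PosDef)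
    (H : Matrix (Fin K) (Fin N) ℂ) (hH : (Hᴴ * H).PosDef) :
    ∃ Q' : Matrix (Fin N) (Fin N) ℂ, Q'.PosDef ∧
      Commute Q' (Hᴴ * H) ∧
      (H * Q' * Hᴴ).charpoly = (H * Q * Hᴴ).charpoly ∧
      Q'.trace.re ≤ Q.trace.re := by
  classical
  open Polynomial in
  set G : Matrix (Fin N) (Fin N) ℂ := Hᴴ * H with hGdef
  have hGH : G.IsHermitian := hH.1
  set V : Matrix (Fin N) (Fin N) ℂ := (hGH.eigenvectorUnitary : Matrix (Fin N) (Fin N) ℂ) with hVdef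
  obtain ⟨hV1, hV2⟩ : star V * V = 1 ∧ V * star V = 1 := Unitary.mem_iff.mp hGH.eigenvectorUnitary.2
  set μ : Fin N → ℝ := hGH.eigenvalues with hμdef
  have hμ : ∀ i, 0 < μ i := hH.eigenvalues_pos
  have hGspec : G = V * diagonal (fun i => (μ i : ℂ)) * star V := hGH.spectral_theorem
  -- square root of G
  set s : Fin N → ℝ := fun i => Real.sqrt (μ i) with hsdef
  have hs : ∀ i, 0 < s i := fun i => Real.sqrt_pos.mpr (hμ i)
  have hss : ∀ i, s i * s i = μ i := fun i => Real.mul_self_sqrt (hμ i).le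
  set Ds : Matrix (Fin N) (Fin N) ℂ := diagonal (fun i => (s i : ℂ)) with hDsdef
  set W : Matrix (Fin N) (Fin N) ℂ := V * Ds with hWdef
  have hDsH : Dsᴴ = Ds := by
    rw [hDsdef, diagonal_conjTranspose]
    refine congrArg diagonal (funext fun i => ?_)
    simp [Pi.star_apply, Complex.star_def, Complex.conj_ofReal]
  have hWH : Wᴴ = Ds * star V := by
    rw [hWdef, conjTranspose_mul, hDsH, Matrix.star_eq_conjTranspose]
  have hWunit : IsUnit W := by
    refine isUnit_iff_exists.mpr ⟨diagonal (fun i => ((s i)⁻¹ : ℂ)) * star V, ?_, ?_⟩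
    · rw [hWdef]
      calc V * Ds * (diagonal (fun i => ((s i)⁻¹ : ℂ)) * star V)
          = V * (Ds * diagonal (fun i => ((s i)⁻¹ : ℂ))) * star V := by
            simp only [Matrix.mul_assoc]
        _ = 1 := by
            rw [hDsdef, diagonal_mul_diagonal]
            have h4 : (fun i => (s i : ℂ) * ((s i)⁻¹ : ℂ)) = fun _ => (1 : ℂ) := by
              ext i
              exact mul_inv_cancel₀ (Complex.ofReal_ne_zero.mpr (hs i).ne')
            rw [h4, diagonal_one, Matrix.mul_one, hV2]
    · rw [hWdef]
      calc diagonal (fun i => ((s i)⁻¹ : ℂ)) * star V * (V * Ds)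
          = diagonal (fun i => ((s i)⁻¹ : ℂ)) * (star V * V) * Ds := by
            simp only [Matrix.mul_assoc]
        _ = 1 := by
            rw [hV1, Matrix.mul_one, hDsdef, diagonal_mul_diagonal]
            have h4 : (fun i => ((s i)⁻¹ : ℂ) * (s i : ℂ)) = fun _ => (1 : ℂ) := by
              ext i
              exact inv_mul_cancel₀ (Complex.ofReal_ne_zero.mpr (hs i).ne')
            rw [h4, diagonal_one]
  have hDs2 : Ds * Ds = diagonal (fun i => (μ i : ℂ)) := by
    rw [hDsdef, diagonal_mul_diagonal]
    exact congrArg diagonal (funext fun i => by rw [← Complex.ofReal_mul, hss i])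
  have hWG : W * Wᴴ = G := by
    rw [hWH, hWdef]
    calc V * Ds * (Ds * star V) = V * (Ds * Ds) * star V := by simp only [Matrix.mul_assoc]
      _ = G := by rw [hDs2, hGspec]
  -- M = Wᴴ Q W
  set M : Matrix (Fin N) (Fin N) ℂ := Wᴴ * Q * W with hMdef
  have hM : M.PosDef := my_posDef_conj Q W hQ hWunit
  have hMH : M.IsHermitian := hM.1
  set U : Matrix (Fin N) (Fin N) ℂ := (hMH.eigenvectorUnitary : Matrix (Fin N) (Fin N) ℂ) with hUdef
  obtain ⟨hU1, hU2⟩ : star U * U = 1 ∧ U * star U = 1 := Unitary.mem_iff.mp hMH.eigenvectorUnitary.2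
  set d : Fin N → ℝ := hMH.eigenvalues with hddef
  have hd : ∀ i, 0 < d i := hM.eigenvalues_pos
  have hMspec : M = U * diagonal (fun i => (d i : ℂ)) * star U := hMH.spectral_theorem
  -- doubly stochastic matrix from U
  set B : Matrix (Fin N) (Fin N) ℝ := Matrix.of (fun i j => Complex.normSq (U i j)) with hBdef
  have hBds : B ∈ doublyStochastic ℝ (Fin N) := by
    rw [mem_doublyStochastic_iff_sum]
    refine ⟨fun i j => Complex.normSq_nonneg _, fun i => ?_, fun j => ?_⟩
    · have := congrFun (congrFun hU2 i) i
      simp only [Matrix.mul_apply, Matrix.one_apply_eq, Matrix.star_apply,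
        Matrix.conjTranspose_apply] at this ⊢
      have h2 : ∑ j, ((Complex.normSq (U i j) : ℂ)) = 1 := by
        rw [← this]
        refine Finset.sum_congr rfl fun j _ => ?_
        rw [← Complex.mul_conj]
        rfl
      exact_mod_cast h2
    · have := congrFun (congrFun hU1 j) j
      simp only [Matrix.mul_apply, Matrix.one_apply_eq, Matrix.star_apply,
        Matrix.conjTranspose_apply] at this ⊢
      have h2 : ∑ i, ((Complex.normSq (U i j) : ℂ)) = 1 := by
        rw [← this]
        refine Finset.sum_congr rfl fun i _ => ?_
        rw [mul_comm, ← Complex.mul_conj]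
        rfl
      exact_mod_cast h2
  set c : Fin N → ℝ := fun i => (μ i)⁻¹ with hcdef
  obtain ⟨σ, hσ⟩ := my_exists_perm_le c d B hBds
  set δ : Fin N → ℝ := fun i => c i * d (σ i) with hδdef
  have hδ : ∀ i, 0 < δ i := fun i => mul_pos (inv_pos.mpr (hμ i)) (hd (σ i))
  set Q' : Matrix (Fin N) (Fin N) ℂ := V * diagonal (fun i => (δ i : ℂ)) * star V with hQ'def
  have hconj_mul : ∀ D E : Matrix (Fin N) (Fin N) ℂ,
      (V * D * star V) * (V * E * star V) = V * (D * E) * star V := by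
    intro D E
    calc (V * D * star V) * (V * E * star V)
        = V * (D * ((star V * V) * (E * star V))) := by simp only [Matrix.mul_assoc]
      _ = V * (D * E) * star V := by rw [hV1, Matrix.one_mul]; simp only [Matrix.mul_assoc]
  refine ⟨Q', ?_, ?_, ?_, ?_⟩
  · -- PosDef
    have hdiag : (diagonal (fun i => (δ i : ℂ))).PosDef :=
      Matrix.PosDef.diagonal fun i => Complex.zero_lt_real.mpr (hδ i)
    have := my_posDef_conj (diagonal (fun i => (δ i : ℂ))) (star V) hdiag
      (isUnit_iff_exists.mpr ⟨V, by rw [hV1], by rw [hV2]⟩)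
    rwa [Matrix.star_eq_conjTranspose, conjTranspose_conjTranspose] at this
  · -- Commute
    rw [Commute, SemiconjBy, hGspec, hQ'def, hconj_mul, hconj_mul,
      diagonal_mul_diagonal, diagonal_mul_diagonal]
    rw [show (fun i => (δ i : ℂ) * (μ i : ℂ)) = (fun i => (μ i : ℂ) * (δ i : ℂ)) from
      funext fun i => mul_comm _ _]
  · -- charpoly
    have hQ'G : Q' * G = V * diagonal (fun i => (d (σ i) : ℂ)) * star V := by
      rw [hQ'def, hGspec, hconj_mul, diagonal_mul_diagonal]
      have hfun : (fun i => (δ i : ℂ) * (μ i : ℂ)) = fun i => (d (σ i) : ℂ) := by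
        funext i
        rw [← Complex.ofReal_mul]
        congr 1
        rw [hδdef, hcdef]
        field_simp [(hμ i).ne']
      rw [hfun]
    have hcpQ'G : (Q' * G).charpoly = ∏ i, ((X : ℂ[X]) - C ((d i : ℂ))) := by
      rw [hQ'G, my_charpoly_conj V (star V) _ hV2, my_charpoly_diagonal]
      exact Equiv.prod_comp σ (fun i => (X : ℂ[X]) - C ((d i : ℂ)))
    have hMcp : M.charpoly = ∏ i, ((X : ℂ[X]) - C ((d i : ℂ))) := by
      rw [hMspec, my_charpoly_conj U (star U) _ hU2, my_charpoly_diagonal]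
    have hQG : (Q * G).charpoly = M.charpoly := by
      have h := my_charpoly_mul_comm_rect (Q * W) Wᴴ
      rw [Fintype.card_fin] at h
      have e1 : Q * W * Wᴴ = Q * G := by rw [Matrix.mul_assoc, hWG]
      have e2 : Wᴴ * (Q * W) = M := by rw [hMdef, Matrix.mul_assoc]
      rw [e1, e2, mul_comm ((X : ℂ[X]) ^ N) M.charpoly] at h
      exact mul_right_cancel₀ (pow_ne_zero N Polynomial.X_ne_zero) h
    have hkey : (Q' * G).charpoly = (Q * G).charpoly := by rw [hcpQ'G, hQG, hMcp]
    have h1 := my_charpoly_mul_comm_rect H (Q' * Hᴴ)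
    have h2 := my_charpoly_mul_comm_rect H (Q * Hᴴ)
    rw [Fintype.card_fin, Fintype.card_fin] at h1 h2
    have e3 : H * (Q' * Hᴴ) = H * Q' * Hᴴ := (Matrix.mul_assoc _ _ _).symm
    have e4 : Q' * Hᴴ * H = Q' * G := by rw [Matrix.mul_assoc, ← hGdef]
    have e5 : H * (Q * Hᴴ) = H * Q * Hᴴ := (Matrix.mul_assoc _ _ _).symm
    have e6 : Q * Hᴴ * H = Q * G := by rw [Matrix.mul_assoc, ← hGdef]
    rw [e3, e4, hkey] at h1
    rw [e5, e6] at h2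
    exact mul_right_cancel₀ (pow_ne_zero N Polynomial.X_ne_zero) (h1.trans h2.symm)
  · -- trace
    have htrQ' : Q'.trace.re = ∑ i, δ i := by
      rw [hQ'def, trace_mul_cycle, hV1, Matrix.one_mul, trace_diagonal]
      rw [show (∑ i, ((δ i : ℂ))) = ((∑ i, δ i : ℝ) : ℂ) by push_cast; ring]
      exact Complex.ofReal_re _
    have htrQ : Q.trace = (star V * Q * V).trace := by
      rw [trace_mul_cycle (star V) Q V, hV2, Matrix.one_mul]
    have hMP : ∀ i, M i i = (μ i : ℂ) * (star V * Q * V) i i := by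
      intro i
      have hM2 : M = Ds * (star V * Q * V) * Ds := by
        rw [hMdef, hWH, hWdef]
        simp only [Matrix.mul_assoc]
      rw [hM2, Matrix.mul_diagonal, Matrix.diagonal_mul]
      rw [show (s i : ℂ) * (star V * Q * V) i i * (s i : ℂ)
          = ((s i : ℂ) * (s i : ℂ)) * (star V * Q * V) i i by ring,
        ← Complex.ofReal_mul, hss i]
    have hPM : ∀ i, (star V * Q * V) i i = ((c i : ℝ) : ℂ) * M i i := by
      intro i
      rw [hMP i, ← mul_assoc, hcdef, ← Complex.ofReal_mul, inv_mul_cancel₀ (hμ i).ne',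
        Complex.ofReal_one, one_mul]
    have hMiire : ∀ i, (M i i).re = ∑ j, B i j * d j := by
      intro i
      have hentry : M i i = ∑ j, ((Complex.normSq (U i j) * d j : ℝ) : ℂ) := by
        rw [hMspec]
        rw [Matrix.mul_apply]
        refine Finset.sum_congr rfl fun j _ => ?_
        rw [Matrix.mul_diagonal, Matrix.star_apply]
        push_cast
        rw [show U i j * (d j : ℂ) * star (U i j) = U i j * star (U i j) * (d j : ℂ) by ring,
          Complex.star_def, Complex.mul_conj]
      rw [hentry, show (∑ j, ((Complex.normSq (U i j) * d j : ℝ) : ℂ))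
        = ((∑ j, Complex.normSq (U i j) * d j : ℝ) : ℂ) by push_cast; ring, Complex.ofReal_re]
      rfl
    have htrQre : Q.trace.re = ∑ i, ∑ j, c i * (B i j * d j) := by
      rw [htrQ, Matrix.trace]
      rw [show (∑ i, (star V * Q * V).diag i) = ∑ i, ((c i : ℝ) : ℂ) * M i i from
        Finset.sum_congr rfl fun i _ => hPM i]
      rw [Complex.re_sum]
      refine Finset.sum_congr rfl fun i _ => ?_
      rw [Complex.re_ofReal_mul, hMiire i, Finset.mul_sum]
    rw [htrQ', htrQre]
    exact hσ
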